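/- Let A be the adjacency matrix of a directed graph with positive in-degrees and out-degrees, D_in = diag(A·1) and D_out = diag(Aᵀ·1) the in- and out-degree matrices, and L = D_in^{-1/2} A D_out^{-1/2} the symmetrically normalized adjacency. Then every element of the numerical range W(L) = {xᴴ L x : xᴴ x = 1, x ∈ ℂᴺ} has absolute value at most 1; in particular every eigenvalue λ of L satisfies |λ| ≤ 1. -/

import Mathlib

open Matrix Finset

/-- For a directed graph with 0/1 adjacency matrix `A`, positive
in-degrees and out-degrees, and symmetrically normalized adjacency
`L i j = A i j / (√(d_i^in) * √(d_j^out))`, every element of the numerical range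
of `L` has absolute value at most 1; in particular every eigenvalue `μ` of `L`
satisfies `|μ| ≤ 1`. -/
theorem sna_numerical_range_le_one {N : ℕ}
    (A : Matrix (Fin N) (Fin N) ℝ)
    (hA : ∀ i j, A i j = 0 ∨ A i j = 1)
    (din dout : Fin N → ℝ)
    (hdin : ∀ i, din i = ∑ j, A i j)
    (hdout : ∀ j, dout j = ∑ i, A i j)
    (hdin_pos : ∀ i, 0 < din i) (hdout_pos : ∀ j, 0 < dout j)
    (L : Matrix (Fin N) (Fin N) ℝ)
    (hL : ∀ i j, L i j = A i j / (Real.sqrt (din i) * Real.sqrt (dout j))) :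
    (∀ x : Fin N → ℂ, (∑ i, Complex.normSq (x i)) = 1 →
      ‖∑ i, ∑ j, (starRingEnd ℂ) (x i) * (L i j : ℂ) * x j‖ ≤ 1) ∧
    (∀ (μ : ℂ) (v : Fin N → ℂ), v ≠ 0 →
      (L.map (fun r => (r : ℂ))).mulVec v = μ • v → ‖μ‖ ≤ 1) := by
  have hsdin : ∀ i, 0 < Real.sqrt (din i) := fun i => Real.sqrt_pos.2 (hdin_pos i)
  have hsdout : ∀ j, 0 < Real.sqrt (dout j) := fun j => Real.sqrt_pos.2 (hdout_pos j)
  have part1 : ∀ x : Fin N → ℂ, (∑ i, Complex.normSq (x i)) = 1 →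
      ‖∑ i, ∑ j, (starRingEnd ℂ) (x i) * (L i j : ℂ) * x j‖ ≤ 1 := by
    intro x hx
    have key : ∀ i j, ‖(starRingEnd ℂ) (x i) * (L i j : ℂ) * x j‖
        ≤ A i j * (Complex.normSq (x i) / din i + Complex.normSq (x j) / dout j) / 2 := by
      intro i j
      rcases hA i j with h0 | h1
      · simp [hL, h0]
      · have habs : ‖(starRingEnd ℂ) (x i) * (L i j : ℂ) * x j‖
            = ‖x i‖ * ‖x j‖ / (Real.sqrt (din i) * Real.sqrt (dout j)) := by
          rw [norm_mul, norm_mul, Complex.norm_conj, Complex.norm_real, Real.norm_eq_abs, hL, h1]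
          rw [abs_of_pos (show (0:ℝ) < 1 / (Real.sqrt (din i) * Real.sqrt (dout j)) by have := hsdin i; have := hsdout j; positivity)]
          ring
        rw [habs, h1, one_mul]
        set a := ‖x i‖
        set b := ‖x j‖
        have hna : Complex.normSq (x i) = a ^ 2 := (Complex.sq_norm _).symm
        have hnb : Complex.normSq (x j) = b ^ 2 := (Complex.sq_norm _).symm
        rw [hna, hnb]
        have hdi : Real.sqrt (din i) ^ 2 = din i := Real.sq_sqrt (hdin_pos i).le
        have hdj : Real.sqrt (dout j) ^ 2 = dout j := Real.sq_sqrt (hdout_pos j).le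
        have h1 : a * b / (Real.sqrt (din i) * Real.sqrt (dout j))
            = (a / Real.sqrt (din i)) * (b / Real.sqrt (dout j)) := by
          field_simp
        have h2 : a ^ 2 / din i = (a / Real.sqrt (din i)) ^ 2 := by
          rw [div_pow, hdi]
        have h3 : b ^ 2 / dout j = (b / Real.sqrt (dout j)) ^ 2 := by
          rw [div_pow, hdj]
        rw [h1, h2, h3]
        nlinarith [sq_nonneg (a / Real.sqrt (din i) - b / Real.sqrt (dout j))]
    calc ‖∑ i, ∑ j, (starRingEnd ℂ) (x i) * (L i j : ℂ) * x j‖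
        ≤ ∑ i, ∑ j, ‖(starRingEnd ℂ) (x i) * (L i j : ℂ) * x j‖ := by
          refine (norm_sum_le _ _).trans (Finset.sum_le_sum fun i _ => ?_)
          exact norm_sum_le _ _
      _ ≤ ∑ i, ∑ j, A i j * (Complex.normSq (x i) / din i + Complex.normSq (x j) / dout j) / 2 := by
          exact Finset.sum_le_sum fun i _ => Finset.sum_le_sum fun j _ => key i j
      _ = 1 := by
          have expand : ∀ i j, A i j * (Complex.normSq (x i) / din i + Complex.normSq (x j) / dout j) / 2
              = A i j * (Complex.normSq (x i) / din i) / 2 + A i j * (Complex.normSq (x j) / dout j) / 2 := by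
            intro i j; ring
          simp_rw [expand, Finset.sum_add_distrib]
          have t1 : ∑ i, ∑ j, A i j * (Complex.normSq (x i) / din i) / 2 = 1 / 2 := by
            have : ∀ i, ∑ j, A i j * (Complex.normSq (x i) / din i) / 2
                = Complex.normSq (x i) / 2 := by
              intro i
              rw [← Finset.sum_div, ← Finset.sum_mul, ← hdin]
              field_simp [(hdin_pos i).ne']
            simp_rw [this]
            rw [← Finset.sum_div, hx]
          have t2 : ∑ i, ∑ j, A i j * (Complex.normSq (x j) / dout j) / 2 = 1 / 2 := by
            rw [Finset.sum_comm]
            have : ∀ j, ∑ i, A i j * (Complex.normSq (x j) / dout j) / 2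
                = Complex.normSq (x j) / 2 := by
              intro j
              rw [← Finset.sum_div, ← Finset.sum_mul, ← hdout]
              field_simp [(hdout_pos j).ne']
            simp_rw [this]
            rw [← Finset.sum_div, hx]
          rw [t1, t2]; norm_num
  refine ⟨part1, ?_⟩
  intro μ v hv heig
  set T : ℝ := ∑ i, Complex.normSq (v i) with hT
  have hTpos : 0 < T := by
    obtain ⟨i0, hi0⟩ := Function.ne_iff.1 hv
    have : 0 < Complex.normSq (v i0) := Complex.normSq_pos.2 hi0
    exact this.trans_le (Finset.single_le_sum (fun i _ => Complex.normSq_nonneg _) (Finset.mem_univ i0))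
  set s : ℝ := Real.sqrt T with hs
  have hspos : 0 < s := Real.sqrt_pos.2 hTpos
  have hs2 : s ^ 2 = T := Real.sq_sqrt hTpos.le
  set x : Fin N → ℂ := fun i => (s⁻¹ : ℝ) * v i with hxdef
  have hxnorm : (∑ i, Complex.normSq (x i)) = 1 := by
    have : ∀ i, Complex.normSq (x i) = s⁻¹ ^ 2 * Complex.normSq (v i) := by
      intro i
      rw [hxdef]
      simp only [Complex.normSq_mul, Complex.normSq_ofReal]
      ring
    simp_rw [this, ← Finset.mul_sum, ← hT]
    rw [inv_pow, hs2]
    field_simp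
  have hsum : (∑ i, ∑ j, (starRingEnd ℂ) (x i) * (L i j : ℂ) * x j)
      = ((s⁻¹ : ℝ) : ℂ) ^ 2 * (μ * (T : ℂ)) := by
    have inner : ∀ i, (∑ j, (L i j : ℂ) * v j) = μ * v i := by
      intro i
      have := congrFun heig i
      simpa [Matrix.mulVec, dotProduct, Matrix.map_apply] using this
    have : ∀ i, ∑ j, (starRingEnd ℂ) (x i) * (L i j : ℂ) * x j
        = ((s⁻¹ : ℝ) : ℂ) ^ 2 * ((starRingEnd ℂ) (v i) * (μ * v i)) := by
      intro i
      have : ∑ j, (starRingEnd ℂ) (x i) * (L i j : ℂ) * x j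
          = ((s⁻¹ : ℝ) : ℂ) ^ 2 * ((starRingEnd ℂ) (v i) * (∑ j, (L i j : ℂ) * v j)) := by
        rw [Finset.mul_sum, Finset.mul_sum]
        refine Finset.sum_congr rfl fun j _ => ?_
        simp only [hxdef, _root_.map_mul, Complex.conj_ofReal]
        ring
      rw [this, inner i]
    simp_rw [this, ← Finset.mul_sum]
    congr 1
    have : ∀ i, (starRingEnd ℂ) (v i) * (μ * v i) = μ * (Complex.normSq (v i) : ℂ) := by
      intro i
      rw [Complex.normSq_eq_conj_mul_self]
      ring
    simp_rw [this, ← Finset.mul_sum]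
    congr 1
    push_cast [hT]
    rfl
  have := part1 x hxnorm
  rw [hsum] at this
  rw [norm_mul, norm_mul, norm_pow, Complex.norm_real, Real.norm_eq_abs, Complex.norm_real, Real.norm_eq_abs,
    abs_of_pos (inv_pos.2 hspos), abs_of_pos hTpos] at this
  have heq : s⁻¹ ^ 2 * T = 1 := by
    rw [inv_pow, hs2]; field_simp
  calc ‖μ‖ = s⁻¹ ^ 2 * (‖μ‖ * T) := by
        rw [← mul_assoc]
        nlinarith [heq]
    _ ≤ 1 := this
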